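/- Let v be a maximal monotone map on ℝ^d that equals the identity outside closure(Ω) for a bounded set Ω. Then for any fixed a ∈ ℝ^d, lim_{|x| → ∞} c_v(a,x)/|x| = √2. -/

import Mathlib

/-- A set-valued map on `ℝ^d` is monotone. -/
def MonotoneSetMap {d : ℕ} (v : EuclideanSpace ℝ (Fin d) → Set (EuclideanSpace ℝ (Fin d))) :
    Prop :=
  ∀ x₁ x₂ y₁ y₂, y₁ ∈ v x₁ → y₂ ∈ v x₂ → 0 ≤ (inner ℝ (y₁ - y₂) (x₁ - x₂) : ℝ)

/-- Maximal monotone set-valued map with full domain. -/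
def MaxMonotone {d : ℕ} (v : EuclideanSpace ℝ (Fin d) → Set (EuclideanSpace ℝ (Fin d))) :
    Prop :=
  MonotoneSetMap v ∧ (∀ x, (v x).Nonempty) ∧
    ∀ w : EuclideanSpace ℝ (Fin d) → Set (EuclideanSpace ℝ (Fin d)),
      MonotoneSetMap w → (∀ x, v x ⊆ w x) → w = v

/-- `ℓ_v(a,b) := inf { √(2⟨b' − a', b − a⟩) : a' ∈ v(a), b' ∈ v(b) }`. -/
noncomputable def ellV {d : ℕ} (v : EuclideanSpace ℝ (Fin d) → Set (EuclideanSpace ℝ (Fin d)))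
    (a b : EuclideanSpace ℝ (Fin d)) : ℝ :=
  sInf {r : ℝ | ∃ a' ∈ v a, ∃ b' ∈ v b, r = Real.sqrt (2 * (inner ℝ (b' - a') (b - a) : ℝ))}

/-- `c_v(a,b)`: infimum over finite chains joining `a` to `b` of the sums of `ℓ_v`. -/
noncomputable def costV {d : ℕ} (v : EuclideanSpace ℝ (Fin d) → Set (EuclideanSpace ℝ (Fin d)))
    (a b : EuclideanSpace ℝ (Fin d)) : ℝ :=
  sInf {r : ℝ | ∃ (N : ℕ) (x : ℕ → EuclideanSpace ℝ (Fin d)), 0 < N ∧ x 0 = a ∧ x N = b ∧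
    r = ∑ i ∈ Finset.range N, ellV v (x i) (x (i+1))}

private lemma value_bound {d : ℕ} {v : EuclideanSpace ℝ (Fin d) → Set (EuclideanSpace ℝ (Fin d))}
    (mono : MonotoneSetMap v) {R : ℝ} (hR : 0 < R)
    (hid' : ∀ z : EuclideanSpace ℝ (Fin d), R < ‖z‖ → v z = {z})
    {x x' : EuclideanSpace ℝ (Fin d)} (hx' : x' ∈ v x) : ‖x'‖ ≤ max ‖x‖ R := by
  have key : ∀ e : EuclideanSpace ℝ (Fin d), ‖e‖ = 1 → ∀ r : ℝ, R < r →
      0 ≤ r ^ 2 - r * inner ℝ e (x + x') + (inner ℝ x x' : ℝ) := by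
    intro e he r hr
    have hrpos : 0 < r := hR.trans hr
    have hz : (r • e) ∈ v (r • e) := by
      rw [hid' (r • e) (by rw [norm_smul, he, Real.norm_eq_abs, abs_of_pos hrpos, mul_one]; exact hr)]
      rfl
    have h := mono x (r • e) x' (r • e) hx' hz
    have hee : (inner ℝ e e : ℝ) = 1 := by
      rw [real_inner_self_eq_norm_mul_norm, he]; ring
    have hxe : (inner ℝ x e : ℝ) = inner ℝ e x := real_inner_comm e x
    have hx'e : (inner ℝ x' e : ℝ) = inner ℝ e x' := real_inner_comm e x'
    have hxx' : (inner ℝ x' x : ℝ) = inner ℝ x x' := real_inner_comm x x'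
    simp only [inner_sub_left, inner_sub_right, real_inner_smul_left, real_inner_smul_right,
      inner_add_right, hee] at h ⊢
    nlinarith [h]
  by_contra hcon
  push_neg at hcon
  have hx'R : R < ‖x'‖ := (le_max_right _ _).trans_lt hcon
  have hx'x : ‖x‖ < ‖x'‖ := (le_max_left _ _).trans_lt hcon
  have hne : x' ≠ x := fun h => by rw [h] at hx'x; exact lt_irrefl _ hx'x
  by_cases hs : x + x' = 0
  · have hx'neg : x' = -x := eq_neg_of_add_eq_zero_right hs
    rw [hx'neg, norm_neg] at hx'x
    exact lt_irrefl _ hx'x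
  · set A := ‖x + x'‖ with hA
    set B := ‖x - x'‖ with hB
    have hBpos : 0 < B := by
      rw [hB, norm_pos_iff, sub_ne_zero]
      exact fun h => hne h.symm
    have hApos : 0 < A := by rw [hA, norm_pos_iff]; exact hs
    set e : EuclideanSpace ℝ (Fin d) := ‖x + x'‖⁻¹ • (x + x') with he_def
    have he : ‖e‖ = 1 := by
      rw [he_def, norm_smul, Real.norm_eq_abs, abs_inv, abs_of_pos hApos, ← hA,
        inv_mul_cancel₀ hApos.ne']
    have hes : (inner ℝ e (x + x') : ℝ) = A := by
      rw [he_def, real_inner_smul_left, real_inner_self_eq_norm_mul_norm, ← hA]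
      field_simp
    -- quadratic facts
    have hA2 : A ^ 2 = ‖x‖ ^ 2 + 2 * inner ℝ x x' + ‖x'‖ ^ 2 := by
      rw [hA, ← real_inner_self_eq_norm_sq, ← real_inner_self_eq_norm_sq, ← real_inner_self_eq_norm_sq]
      simp only [inner_add_left, inner_add_right]
      rw [real_inner_comm x x']; ring
    have hB2 : B ^ 2 = ‖x‖ ^ 2 - 2 * inner ℝ x x' + ‖x'‖ ^ 2 := by
      rw [hB, ← real_inner_self_eq_norm_sq, ← real_inner_self_eq_norm_sq, ← real_inner_self_eq_norm_sq]
      simp only [inner_sub_left, inner_sub_right]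
      rw [real_inner_comm x x']; ring
    have hx'le : 2 * ‖x'‖ ≤ A + B := by
      have : (2:ℝ) • x' = (x + x') - (x - x') := by module
      calc 2 * ‖x'‖ = ‖(2:ℝ) • x'‖ := by rw [norm_smul]; simp
        _ = ‖(x + x') - (x - x')‖ := by rw [this]
        _ ≤ A + B := norm_sub_le _ _
    set rp := (A + B) / 2 with hrp
    set rm := (A - B) / 2 with hrm
    have hroot : (inner ℝ x x' : ℝ) = rp * rm := by
      rw [hrp, hrm]; nlinarith [hA2, hB2]
    have hrpgt : R < rp := by
      have : ‖x'‖ ≤ rp := by rw [hrp]; linarith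
      linarith
    have hrmlt : rm < rp := by rw [hrp, hrm]; linarith
    set r := (max R rm + rp) / 2 with hr_def
    have hr1 : R < r := by
      have := le_max_left R rm
      rw [hr_def]
      cases le_total R rm with
      | inl h => rw [max_eq_right h]; linarith
      | inr h => rw [max_eq_left h]; linarith
    have hr2 : rm < r := by
      have := le_max_right R rm
      rw [hr_def]
      cases le_total R rm with
      | inl h => rw [max_eq_right h]; linarith
      | inr h => rw [max_eq_left h]; linarith
    have hr3 : r < rp := by
      rw [hr_def]
      cases le_total R rm with
      | inl h => rw [max_eq_right h]; linarith
      | inr h => rw [max_eq_left h]; linarith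
    have h := key e he r hr1
    rw [hes, hroot] at h
    have hAsum : A = rp + rm := by rw [hrp, hrm]; ring
    nlinarith [mul_pos (sub_pos.mpr hr3) (sub_pos.mpr hr2)]


private lemma ell_nonneg {d : ℕ} (v : EuclideanSpace ℝ (Fin d) → Set (EuclideanSpace ℝ (Fin d)))
    (a b : EuclideanSpace ℝ (Fin d)) : 0 ≤ ellV v a b := by
  apply Real.sInf_nonneg
  rintro r ⟨a', _, b', _, rfl⟩
  exact Real.sqrt_nonneg _

private lemma ell_lower {d : ℕ} {v : EuclideanSpace ℝ (Fin d) → Set (EuclideanSpace ℝ (Fin d))}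
    (mono : MonotoneSetMap v) (hne : ∀ x, (v x).Nonempty) {R : ℝ} (hR : 0 < R)
    (hid' : ∀ z : EuclideanSpace ℝ (Fin d), R < ‖z‖ → v z = {z})
    (x y : EuclideanSpace ℝ (Fin d)) :
    Real.sqrt 2 * (max (‖y‖ - 3*R) 0 - max (‖x‖ - 3*R) 0) ≤ ellV v x y := by
  obtain ⟨a₀, ha₀⟩ := hne x
  obtain ⟨b₀, hb₀⟩ := hne y
  refine le_csInf ⟨Real.sqrt (2 * (inner ℝ (b₀ - a₀) (y - x) : ℝ)), a₀, ha₀, b₀, hb₀, rfl⟩ ?_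
  rintro r ⟨a', ha', b', hb', rfl⟩
  set fx := max (‖x‖ - 3*R) 0 with hfx
  set fy := max (‖y‖ - 3*R) 0 with hfy
  have hinner : 0 ≤ (inner ℝ (b' - a') (y - x) : ℝ) := by
    have := mono y x b' a' hb' ha'
    exact this
  rcases le_or_gt fy fx with hle | hlt
  · calc Real.sqrt 2 * (fy - fx) ≤ 0 := by
          apply mul_nonpos_of_nonneg_of_nonpos (Real.sqrt_nonneg 2); linarith
      _ ≤ _ := Real.sqrt_nonneg _
  · have hfy_pos : 0 < fy := lt_of_le_of_lt (le_max_right _ _) hlt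
    have hy3R : 3*R < ‖y‖ := by
      by_contra h
      push_neg at h
      rw [hfy, max_eq_right (by linarith)] at hfy_pos
      exact lt_irrefl _ hfy_pos
    have hfy_eq : fy = ‖y‖ - 3*R := by rw [hfy, max_eq_left (by linarith)]
    have hyR : R < ‖y‖ := by linarith
    have hb'y : b' = y := by
      have := hid' y hyR
      rw [this] at hb'
      exact hb'
    rcases le_or_gt ‖x‖ R with h1 | h2
    · -- x deep inside: use value bound for a'
      have ha'R : ‖a'‖ ≤ R := by
        have := value_bound mono hR hid' ha'
        rwa [max_eq_right h1] at this
      have hfx0 : fx = 0 := by rw [hfx, max_eq_right (by linarith)]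
      rw [hfx0, sub_zero, hfy_eq]
      have h2sqrt : Real.sqrt 2 * (‖y‖ - 3*R) = Real.sqrt (2 * (‖y‖ - 3*R)^2) := by
        rw [Real.sqrt_mul (by norm_num), Real.sqrt_sq (by linarith)]
      rw [h2sqrt]
      apply Real.sqrt_le_sqrt
      have expand : (inner ℝ (b' - a') (y - x) : ℝ)
          = ‖y‖^2 - inner ℝ y x - inner ℝ a' y + inner ℝ a' x := by
        rw [hb'y]
        simp only [inner_sub_left, inner_sub_right, real_inner_self_eq_norm_sq]
        ring_nf
      have i1 : (inner ℝ y x : ℝ) ≤ ‖y‖ * R := by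
        calc (inner ℝ y x : ℝ) ≤ ‖y‖ * ‖x‖ := real_inner_le_norm y x
          _ ≤ ‖y‖ * R := by nlinarith
      have i2 : (inner ℝ a' y : ℝ) ≤ R * ‖y‖ := by
        calc (inner ℝ a' y : ℝ) ≤ ‖a'‖ * ‖y‖ := real_inner_le_norm a' y
          _ ≤ R * ‖y‖ := by nlinarith
      have i3 : -(R*R) ≤ (inner ℝ a' x : ℝ) := by
        have := abs_real_inner_le_norm a' x
        have h4 : ‖a'‖ * ‖x‖ ≤ R * R := by nlinarith [norm_nonneg a', norm_nonneg x]
        have := neg_abs_le (inner ℝ a' x : ℝ)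
        nlinarith [abs_real_inner_le_norm a' x]
      rw [expand]
      nlinarith
    · -- x outside: a' = x, pure distance
      have ha'x : a' = x := by
        have := hid' x h2
        rw [this] at ha'
        exact ha'
      rw [ha'x, hb'y, real_inner_self_eq_norm_sq]
      have : Real.sqrt (2 * ‖y - x‖^2) = Real.sqrt 2 * ‖y - x‖ := by
        rw [Real.sqrt_mul (by norm_num), Real.sqrt_sq (norm_nonneg _)]
      rw [this]
      apply mul_le_mul_of_nonneg_left _ (Real.sqrt_nonneg 2)
      have hfxge : ‖x‖ - 3*R ≤ fx := le_max_left _ _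
      have := norm_sub_norm_le y x
      rw [hfy_eq]
      linarith

private lemma chain_mem {d : ℕ} (v : EuclideanSpace ℝ (Fin d) → Set (EuclideanSpace ℝ (Fin d)))
    (a b : EuclideanSpace ℝ (Fin d)) :
    ellV v a b ∈ {r : ℝ | ∃ (N : ℕ) (x : ℕ → EuclideanSpace ℝ (Fin d)), 0 < N ∧ x 0 = a ∧ x N = b ∧
      r = ∑ i ∈ Finset.range N, ellV v (x i) (x (i+1))} := by
  refine ⟨1, fun i => if i = 0 then a else b, one_pos, by simp, by simp, ?_⟩
  simp

private lemma cost_lower {d : ℕ} {v : EuclideanSpace ℝ (Fin d) → Set (EuclideanSpace ℝ (Fin d))}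
    (mono : MonotoneSetMap v) (hne : ∀ x, (v x).Nonempty) {R : ℝ} (hR : 0 < R)
    (hid' : ∀ z : EuclideanSpace ℝ (Fin d), R < ‖z‖ → v z = {z})
    (a b : EuclideanSpace ℝ (Fin d)) :
    Real.sqrt 2 * (max (‖b‖ - 3*R) 0 - max (‖a‖ - 3*R) 0) ≤ costV v a b := by
  apply le_csInf ⟨_, chain_mem v a b⟩
  rintro r ⟨N, x, hN, h0, hNb, rfl⟩
  calc Real.sqrt 2 * (max (‖b‖ - 3*R) 0 - max (‖a‖ - 3*R) 0)
      = ∑ i ∈ Finset.range N, Real.sqrt 2 *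
          (max (‖x (i+1)‖ - 3*R) 0 - max (‖x i‖ - 3*R) 0) := by
        rw [← Finset.mul_sum, Finset.sum_range_sub (fun i => max (‖x i‖ - 3*R) 0) N, h0, hNb]
    _ ≤ ∑ i ∈ Finset.range N, ellV v (x i) (x (i+1)) :=
        Finset.sum_le_sum fun i _ => ell_lower mono hne hR hid' (x i) (x (i+1))

private lemma cost_upper {d : ℕ} {v : EuclideanSpace ℝ (Fin d) → Set (EuclideanSpace ℝ (Fin d))}
    {R : ℝ}
    (hid' : ∀ z : EuclideanSpace ℝ (Fin d), R < ‖z‖ → v z = {z})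
    {a a' b : EuclideanSpace ℝ (Fin d)} (ha' : a' ∈ v a) (hb : R < ‖b‖) :
    costV v a b ≤ Real.sqrt 2 * (‖b‖ + max ‖a‖ ‖a'‖) := by
  have hb' : b ∈ v b := by rw [hid' b hb]; rfl
  have bdd : BddBelow {r : ℝ | ∃ (N : ℕ) (x : ℕ → EuclideanSpace ℝ (Fin d)), 0 < N ∧ x 0 = a ∧
      x N = b ∧ r = ∑ i ∈ Finset.range N, ellV v (x i) (x (i+1))} := by
    refine ⟨0, ?_⟩
    rintro r ⟨N, x, hN, h0, hNb, rfl⟩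
    exact Finset.sum_nonneg fun i _ => ell_nonneg v _ _
  calc costV v a b ≤ ellV v a b := csInf_le bdd (chain_mem v a b)
    _ ≤ Real.sqrt (2 * (inner ℝ (b - a') (b - a) : ℝ)) := by
        refine csInf_le ⟨0, ?_⟩ ⟨a', ha', b, hb', rfl⟩
        rintro r ⟨a'', _, b'', _, rfl⟩
        exact Real.sqrt_nonneg _
    _ ≤ Real.sqrt (2 * (‖b‖ + max ‖a‖ ‖a'‖)^2) := by
        apply Real.sqrt_le_sqrt
        have h1 : (inner ℝ (b - a') (b - a) : ℝ) ≤ ‖b - a'‖ * ‖b - a‖ := real_inner_le_norm _ _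
        have h2 : ‖b - a'‖ ≤ ‖b‖ + max ‖a‖ ‖a'‖ :=
          (norm_sub_le _ _).trans (by simp [le_max_right ‖a‖ ‖a'‖])
        have h3 : ‖b - a‖ ≤ ‖b‖ + max ‖a‖ ‖a'‖ :=
          (norm_sub_le _ _).trans (by simp [le_max_left ‖a‖ ‖a'‖])
        nlinarith [norm_nonneg (b - a'), norm_nonneg (b - a), norm_nonneg b,
          le_max_left ‖a‖ ‖a'‖, norm_nonneg a]
    _ = Real.sqrt 2 * (‖b‖ + max ‖a‖ ‖a'‖) := by
        rw [Real.sqrt_mul (by norm_num), Real.sqrt_sq]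
        positivity

theorem stmt16 {d : ℕ} (Ω : Set (EuclideanSpace ℝ (Fin d))) (hΩb : Bornology.IsBounded Ω)
    (v : EuclideanSpace ℝ (Fin d) → Set (EuclideanSpace ℝ (Fin d)))
    (hv : MaxMonotone v) (hid : ∀ x ∉ closure Ω, v x = {x})
    (a : EuclideanSpace ℝ (Fin d)) :
    Filter.Tendsto (fun x : EuclideanSpace ℝ (Fin d) => costV v a x / ‖x‖)
      (Bornology.cobounded (EuclideanSpace ℝ (Fin d))) (nhds (Real.sqrt 2)) := by
  obtain ⟨mono, hne, -⟩ := hv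
  obtain ⟨r₀, hr₀⟩ := hΩb.closure.subset_closedBall 0
  set R := max r₀ 1 with hRdef
  have hR : (0:ℝ) < R := lt_of_lt_of_le one_pos (le_max_right _ _)
  have hid' : ∀ z : EuclideanSpace ℝ (Fin d), R < ‖z‖ → v z = {z} := by
    intro z hz
    apply hid
    intro hmem
    have := hr₀ hmem
    rw [Metric.mem_closedBall, dist_zero_right] at this
    exact absurd (this.trans (le_max_left r₀ 1)) (not_le.mpr hz)
  obtain ⟨a₀', ha₀'⟩ := hne a
  set K := max ‖a‖ ‖a₀'‖ with hK
  set C := Real.sqrt 2 * (3*R + max (‖a‖ - 3*R) 0 + K) with hC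
  have hKnn : 0 ≤ K := le_trans (norm_nonneg a) (le_max_left _ _)
  have hCnn : 0 ≤ C := by
    apply mul_nonneg (Real.sqrt_nonneg 2)
    have := le_max_right (‖a‖ - 3*R) 0
    nlinarith
  have key : ∀ᶠ x : EuclideanSpace ℝ (Fin d) in Bornology.cobounded _,
      ‖costV v a x / ‖x‖ - Real.sqrt 2‖ ≤ C / ‖x‖ := by
    have hev : ∀ᶠ x : EuclideanSpace ℝ (Fin d) in Bornology.cobounded _, R < ‖x‖ :=
      tendsto_norm_cobounded_atTop.eventually (Filter.eventually_gt_atTop R)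
    filter_upwards [hev] with x hx
    have hxpos : 0 < ‖x‖ := hR.trans hx
    have hup : costV v a x ≤ Real.sqrt 2 * (‖x‖ + K) := cost_upper hid' ha₀' hx
    have hlo : Real.sqrt 2 * (max (‖x‖ - 3*R) 0 - max (‖a‖ - 3*R) 0) ≤ costV v a x :=
      cost_lower mono hne hR hid' a x
    have hfx : ‖x‖ - 3*R ≤ max (‖x‖ - 3*R) 0 := le_max_left _ _
    have hs2 : (0:ℝ) ≤ Real.sqrt 2 := Real.sqrt_nonneg 2
    set M := 3*R + max (‖a‖ - 3*R) 0 with hM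
    have hMnn : 0 ≤ M := by
      have := le_max_right (‖a‖ - 3*R) 0
      rw [hM]; nlinarith
    have hCM : C = Real.sqrt 2 * M + Real.sqrt 2 * K := by rw [hC, hM]; ring
    have hsM : 0 ≤ Real.sqrt 2 * M := mul_nonneg hs2 hMnn
    have hsK : 0 ≤ Real.sqrt 2 * K := mul_nonneg hs2 hKnn
    have hbound : |costV v a x - Real.sqrt 2 * ‖x‖| ≤ C := by
      rw [abs_le]
      constructor
      · have h6 : Real.sqrt 2 * (‖x‖ - M) ≤ costV v a x := by
          refine le_trans ?_ hlo
          apply mul_le_mul_of_nonneg_left _ hs2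
          rw [hM]; linarith
        have hexp : Real.sqrt 2 * (‖x‖ - M) = Real.sqrt 2 * ‖x‖ - Real.sqrt 2 * M := by ring
        rw [hexp] at h6
        linarith
      · have hexp : Real.sqrt 2 * (‖x‖ + K) = Real.sqrt 2 * ‖x‖ + Real.sqrt 2 * K := by ring
        rw [hexp] at hup
        linarith
    have heq : costV v a x / ‖x‖ - Real.sqrt 2 = (costV v a x - Real.sqrt 2 * ‖x‖) / ‖x‖ := by
      field_simp
    rw [heq, Real.norm_eq_abs, abs_div, abs_of_pos hxpos]
    exact div_le_div_of_nonneg_right hbound hxpos.le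
  have hlim : Filter.Tendsto (fun x : EuclideanSpace ℝ (Fin d) => C / ‖x‖)
      (Bornology.cobounded _) (nhds 0) := by
    have h1 : Filter.Tendsto (fun x : EuclideanSpace ℝ (Fin d) => ‖x‖⁻¹)
        (Bornology.cobounded _) (nhds 0) := tendsto_norm_cobounded_atTop.inv_tendsto_atTop
    have := h1.const_mul C
    simpa [div_eq_mul_inv] using this
  have h0 : Filter.Tendsto (fun x : EuclideanSpace ℝ (Fin d) => costV v a x / ‖x‖ - Real.sqrt 2)
      (Bornology.cobounded _) (nhds 0) := squeeze_zero_norm' key hlim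
  have := h0.add_const (Real.sqrt 2)
  simpa using this
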